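/- Let n ≥ 2 and let h : ℝ → ℝ be continuous. Then for every v ∈ ℝ^n with v ≠ 0, ∫_{S^{n−1}} h(⟨σ, v⟩) dσ = ω_{n−2} ∫_{−1}^{1} (1−s²)^{(n−3)/2} h(|v|·s) ds, where ω_{n−2} is the total surface measure of S^{n−2} (with the convention ω_0 = 2 for n = 2). -/

import Mathlib

open MeasureTheory
open scoped RealInnerProductSpace

/-- `ω_k`, the total surface measure of the unit sphere `S^k ⊆ ℝ^{k+1}`. -/
noncomputable def sphereVol (k : ℕ) : ℝ :=
  ((volume : Measure (EuclideanSpace ℝ (Fin (k + 1)))).toSphere Set.univ).toReal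

open Set Metric

section Aux

lemma fh_integral_volumeIoiPow (k : ℕ) (g : ℝ → ℝ) :
    ∫ r : Ioi (0:ℝ), g r ∂(Measure.volumeIoiPow k) = ∫ r in Ioi (0:ℝ), r ^ k * g r := by
  simp only [Measure.volumeIoiPow, ENNReal.ofReal]
  rw [integral_withDensity_eq_integral_smul
    ((measurable_subtype_coe.pow_const _).real_toNNReal),
    integral_subtype_comap measurableSet_Ioi fun a : ℝ ↦ Real.toNNReal (a ^ k) • g a,
    setIntegral_congr_fun measurableSet_Ioi fun x hx ↦ ?_]
  rw [NNReal.smul_def, Real.coe_toNNReal _ (pow_nonneg hx.out.le _), smul_eq_mul]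

lemma fh_sphereVol_eq (k : ℕ) :
    sphereVol k = (k+1 : ℕ) •
      ((volume : Measure (EuclideanSpace ℝ (Fin (k+1)))) (ball 0 1)).toReal := by
  rw [sphereVol, Measure.toSphere_apply_univ, ENNReal.toReal_mul, nsmul_eq_mul]
  rw [finrank_euclideanSpace_fin]
  rw [ENNReal.toReal_natCast]

lemma fh_integral_polar {E : Type*} [NormedAddCommGroup E] [NormedSpace ℝ E]
    [MeasurableSpace E] [BorelSpace E] [FiniteDimensional ℝ E] [Nontrivial E]
    (μ : Measure E) [μ.IsAddHaarMeasure] (F : E → ℝ) :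
    ∫ x, F x ∂μ = ∫ p : sphere (0:E) 1 × Ioi (0:ℝ),
      F ((p.2 : ℝ) • (p.1 : E)) ∂(μ.toSphere.prod (.volumeIoiPow (Module.finrank ℝ E - 1))) := by
  have h1 : ∫ x, F x ∂μ = ∫ x : ({(0:E)}ᶜ : Set E), F x ∂(μ.comap Subtype.val) := by
    rw [integral_subtype_comap (measurableSet_singleton _).compl, restrict_compl_singleton]
  rw [h1, ← μ.measurePreserving_homeomorphUnitSphereProd.integral_comp
      (Homeomorph.measurableEmbedding _)
      (fun p : sphere (0:E) 1 × Ioi (0:ℝ) => F ((p.2 : ℝ) • (p.1 : E)))]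
  refine integral_congr_ae (Filter.Eventually.of_forall fun x => ?_)
  have h2 : ((homeomorphUnitSphereProd E x).2 : ℝ) • ((homeomorphUnitSphereProd E x).1 : E)
      = (x : E) := by
    conv_rhs => rw [← (homeomorphUnitSphereProd E).symm_apply_apply x]
    rfl
  simp only [h2]

noncomputable def fhSplit (m : ℕ) :
    (ℝ × EuclideanSpace ℝ (Fin (m+1))) ≃ᵐ EuclideanSpace ℝ (Fin (m+2)) :=
  ((MeasurableEquiv.refl ℝ).prodCongr
      (MeasurableEquiv.toLp 2 (Fin (m+1) → ℝ)).symm).trans <|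
    ((MeasurableEquiv.piFinSuccAbove (fun _ : Fin (m+2) => ℝ) 0).symm.trans
      (MeasurableEquiv.toLp 2 (Fin (m+2) → ℝ)).symm.symm)

lemma fhSplit_measurePreserving (m : ℕ) : MeasurePreserving (fhSplit m) volume volume := by
  have h1 : MeasurePreserving
      ((MeasurableEquiv.refl ℝ).prodCongr (MeasurableEquiv.toLp 2 (Fin (m+1) → ℝ)).symm)
      volume volume := by
    rw [show (volume : Measure (ℝ × EuclideanSpace ℝ (Fin (m+1)))) = Measure.prod volume volume
        from rfl]
    exact (MeasurePreserving.id volume).prod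
      (EuclideanSpace.volume_preserving_symm_measurableEquiv_toLp (Fin (m+1)))
  have h2 := (volume_preserving_piFinSuccAbove (fun _ : Fin (m+2) => ℝ) 0).symm
    (MeasurableEquiv.piFinSuccAbove (fun _ : Fin (m+2) => ℝ) 0)
  have h3 := (EuclideanSpace.volume_preserving_symm_measurableEquiv_toLp (Fin (m+2))).symm
  exact ((h3.comp h2).comp h1 : _)

lemma fhSplit_norm (m : ℕ) (t : ℝ) (y : EuclideanSpace ℝ (Fin (m+1))) :
    ‖fhSplit m (t, y)‖ = Real.sqrt (t^2 + ‖y‖^2) := by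
  rw [EuclideanSpace.norm_eq, EuclideanSpace.norm_eq]
  congr 1
  rw [Fin.sum_univ_succ]
  congr 1
  · rw [show (fhSplit m (t, y)) 0 = t from rfl, Real.norm_eq_abs, sq_abs]
  · rw [Real.sq_sqrt (by positivity)]
    exact Finset.sum_congr rfl fun j _ => by
      rw [show (fhSplit m (t, y)) j.succ = y j from rfl]

lemma fh_cos_image_Ioo : Real.cos '' Ioo 0 Real.pi = Ioo (-1 : ℝ) 1 := by
  apply Subset.antisymm
  · rintro _ ⟨θ, hθ, rfl⟩
    constructor
    · have := Real.strictAntiOn_cos ⟨hθ.1.le, hθ.2.le⟩ ⟨Real.pi_pos.le, le_refl _⟩ hθ.2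
      rwa [Real.cos_pi] at this
    · have := Real.strictAntiOn_cos ⟨le_refl _, Real.pi_pos.le⟩ ⟨hθ.1.le, hθ.2.le⟩ hθ.1
      rwa [Real.cos_zero] at this
  · intro s hs
    exact ⟨Real.arccos s, ⟨Real.arccos_pos.2 hs.2,
      (Real.arccos_le_pi s).lt_of_ne (fun he => by
        have := Real.arccos_eq_pi.1 he; linarith [hs.1])⟩,
      Real.cos_arccos hs.1.le hs.2.le⟩

lemma fh_subst_cos (m : ℕ) (h : ℝ → ℝ) (b : ℝ) :
    ∫ s in Ioo (-1:ℝ) 1, (1 - s^2) ^ (((m:ℝ)-1)/2) * h (b*s)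
      = ∫ θ in Ioo 0 Real.pi, Real.sin θ ^ m * h (b * Real.cos θ) := by
  rw [← fh_cos_image_Ioo,
    integral_image_eq_integral_abs_deriv_smul measurableSet_Ioo
      (fun θ _ => (Real.hasDerivAt_cos θ).hasDerivWithinAt)
      (Real.injOn_cos.mono Ioo_subset_Icc_self)]
  refine setIntegral_congr_fun measurableSet_Ioo fun θ hθ => ?_
  have hs : 0 < Real.sin θ := Real.sin_pos_of_pos_of_lt_pi hθ.1 hθ.2
  have h1 : (1 - Real.cos θ^2 : ℝ) ^ (((m:ℝ)-1)/2) = Real.sin θ ^ ((m:ℝ)-1) := by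
    rw [← Real.sin_sq, ← Real.rpow_natCast (Real.sin θ) 2, ← Real.rpow_mul hs.le]
    congr 1
    push_cast
    ring
  rw [smul_eq_mul, abs_neg, abs_of_pos hs, h1, ← mul_assoc]
  congr 1
  rw [← Real.rpow_natCast (Real.sin θ) m]
  nth_rewrite 1 [show Real.sin θ = Real.sin θ ^ (1:ℝ) from (Real.rpow_one _).symm]
  rw [← Real.rpow_add hs]
  norm_num

end Aux

set_option maxHeartbeats 1000000 in
/-- the Funk–Hecke formula for zonal functions. -/
theorem stmt_7 (n : ℕ) (hn : 2 ≤ n) (h : ℝ → ℝ) (hh : Continuous h)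
    (v : EuclideanSpace ℝ (Fin n)) (hv : v ≠ 0) :
    (∫ σ : Metric.sphere (0 : EuclideanSpace ℝ (Fin n)) 1,
        h ⟪(σ : EuclideanSpace ℝ (Fin n)), v⟫
        ∂(volume : Measure (EuclideanSpace ℝ (Fin n))).toSphere) =
      sphereVol (n - 2) *
        ∫ s in (-1 : ℝ)..1, (1 - s ^ 2) ^ (((n : ℝ) - 3) / 2) * h (‖v‖ * s) := by
  obtain ⟨m, rfl⟩ : ∃ m, n = m + 2 := ⟨n - 2, by omega⟩
  set ψ : ℝ → ℝ := Set.indicator (Iio (1:ℝ)) (fun _ => 1) with hψdef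
  set F : EuclideanSpace ℝ (Fin (m+2)) → ℝ :=
    fun x => ψ ‖x‖ * h (⟪x, v⟫ / ‖x‖) with hFdef
  -- basis with b 0 = ‖v‖⁻¹ • v
  have hvn : ‖v‖ ≠ 0 := norm_ne_zero_iff.2 hv
  have hcard : Module.finrank ℝ (EuclideanSpace ℝ (Fin (m+2))) = Fintype.card (Fin (m+2)) := by
    simp [finrank_euclideanSpace_fin]
  have horth : Orthonormal ℝ (({0} : Set (Fin (m+2))).restrict
      (fun _ => (‖v‖⁻¹ • v : EuclideanSpace ℝ (Fin (m+2))))) := by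
    constructor
    · intro i
      show ‖‖v‖⁻¹ • v‖ = 1
      simp only [norm_smul, norm_inv, norm_norm]
      field_simp
    · intro i j hij
      exact absurd (Subtype.ext (by
        have hi := i.2; have hj := j.2
        simp only [Set.mem_singleton_iff] at hi hj
        rw [hi, hj])) hij
  obtain ⟨b, hb⟩ := horth.exists_orthonormalBasis_extension_of_card_eq hcard
  have hb0 : b 0 = ‖v‖⁻¹ • v := hb 0 rfl
  set G : EuclideanSpace ℝ (Fin (m+2)) → ℝ :=
    fun y => ψ ‖y‖ * h (‖v‖ * y 0 / ‖y‖) with hGdef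
  have hFG : ∀ x, F x = G (b.repr x) := by
    intro x
    have h1 : ‖b.repr x‖ = ‖x‖ := b.repr.norm_map x
    have h2 : (b.repr x) 0 = ‖v‖⁻¹ * ⟪x, v⟫ := by
      rw [b.repr_apply_apply, hb0, real_inner_smul_left, real_inner_comm]
    rw [hGdef, hFdef]
    simp only [h1, h2, ← mul_assoc, mul_inv_cancel₀ hvn, one_mul]
  -- bound M
  obtain ⟨M, hM⟩ := (isCompact_Icc (a := -‖v‖) (b := ‖v‖)).exists_bound_of_continuousOn
    hh.continuousOn
  have hM0 : (0:ℝ) ≤ M := le_trans (norm_nonneg _) (hM 0 ⟨neg_nonpos.2 (norm_nonneg v),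
    norm_nonneg v⟩)
  have hqmem : ∀ x : EuclideanSpace ℝ (Fin (m+2)), ⟪x, v⟫ / ‖x‖ ∈ Icc (-‖v‖) ‖v‖ := by
    intro x
    rw [Set.mem_Icc, ← abs_le]
    rcases eq_or_ne x 0 with rfl | hx
    · simp [norm_nonneg]
    · rw [abs_div, abs_of_nonneg (norm_nonneg x), div_le_iff₀ (norm_pos_iff.2 hx)]
      exact (abs_real_inner_le_norm x v).trans (by rw [mul_comm])
  -- measurability
  have hψmeas : Measurable ψ := measurable_const.indicator measurableSet_Iio
  have hFmeas : Measurable F := by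
    apply (hψmeas.comp measurable_norm).mul
    exact hh.measurable.comp (((continuous_id.inner continuous_const).measurable).div
      measurable_norm)
  have hψle : ∀ r : ℝ, |ψ r| ≤ 1 := by
    intro r
    rw [hψdef]
    rcases le_or_gt 1 r with hr | hr
    · rw [Set.indicator_of_notMem (by simpa using hr)]; norm_num
    · rw [Set.indicator_of_mem (by simpa using hr)]; norm_num
  have hIntF : Integrable F := by
    refine Integrable.mono' (g := fun x => (ball (0:EuclideanSpace ℝ (Fin (m+2))) 1).indicator
      (fun _ => M) x) ((integrable_indicator_iff measurableSet_ball).2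
        ((integrableOn_const_iff enorm_ne_top).2 (Or.inr measure_ball_lt_top)))
      hFmeas.aestronglyMeasurable (Filter.Eventually.of_forall fun x => ?_)
    by_cases hx : x ∈ ball (0:EuclideanSpace ℝ (Fin (m+2))) 1
    · refine le_trans ?_ (le_of_eq (Set.indicator_of_mem hx (fun _ => M)).symm)
      calc ‖F x‖ = ‖ψ ‖x‖‖ * ‖h (⟪x, v⟫ / ‖x‖)‖ := norm_mul _ _
      _ ≤ 1 * M := mul_le_mul (by rw [Real.norm_eq_abs]; exact hψle _) (hM _ (hqmem x))
          (norm_nonneg _) zero_le_one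
      _ = M := one_mul M
    · refine le_trans ?_ (le_of_eq (Set.indicator_of_notMem hx (fun _ => M)).symm)
      rw [mem_ball_zero_iff, not_lt] at hx
      have h0 : ψ ‖x‖ = 0 := Set.indicator_of_notMem (by simpa using hx) _
      simp [hFdef, h0]
  set c : ℝ := ∫ r in Ioi (0:ℝ), r ^ (m+1) * ψ r with hcdef
  have hL : ∫ x, F x =
      (∫ σ : sphere (0 : EuclideanSpace ℝ (Fin (m+2))) 1,
        h ⟪(σ : EuclideanSpace ℝ (Fin (m+2))), v⟫
        ∂(volume : Measure (EuclideanSpace ℝ (Fin (m+2)))).toSphere) * c := by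
    rw [fh_integral_polar volume F,
      show Module.finrank ℝ (EuclideanSpace ℝ (Fin (m+2))) - 1 = m + 1 by
        simp [finrank_euclideanSpace_fin]]
    have key : ∀ p : sphere (0 : EuclideanSpace ℝ (Fin (m+2))) 1 × Ioi (0:ℝ),
        F ((p.2 : ℝ) • (p.1 : EuclideanSpace ℝ (Fin (m+2))))
          = h ⟪(p.1 : EuclideanSpace ℝ (Fin (m+2))), v⟫ * ψ (p.2 : ℝ) := by
      rintro ⟨σ, r⟩
      have hr : (0:ℝ) < r := r.2
      have hσ : ‖(σ : EuclideanSpace ℝ (Fin (m+2)))‖ = 1 := mem_sphere_zero_iff_norm.1 σ.2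
      simp only [hFdef, norm_smul, hσ, Real.norm_eq_abs, abs_of_pos hr, mul_one,
        real_inner_smul_left]
      rw [mul_div_cancel_left₀ _ hr.ne', mul_comm (ψ (r:ℝ)) _]
    simp only [key]
    rw [integral_prod_mul (fun σ : sphere (0 : EuclideanSpace ℝ (Fin (m+2))) 1 =>
        h ⟪(σ : EuclideanSpace ℝ (Fin (m+2))), v⟫) (fun r : Ioi (0:ℝ) => ψ (r:ℝ)),
      fh_integral_volumeIoiPow]
  -- transport to coordinates
  set W : ℝ → ℝ → ℝ := fun t ρ => ψ (Real.sqrt (t^2 + ρ^2)) *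
    h (‖v‖ * t / Real.sqrt (t^2 + ρ^2)) with hWdef
  have hGsplit : ∀ p : ℝ × EuclideanSpace ℝ (Fin (m+1)), G (fhSplit m p) = W p.1 ‖p.2‖ := by
    rintro ⟨t, y⟩
    rw [hGdef, hWdef]
    simp only [fhSplit_norm m t y, show (fhSplit m (t, y)) 0 = t from rfl]
  have hstep1 : ∫ x, F x = ∫ p : ℝ × EuclideanSpace ℝ (Fin (m+1)), W p.1 ‖p.2‖ := by
    calc ∫ x, F x = ∫ x, G (b.measurableEquiv x) := by
          refine integral_congr_ae (Filter.Eventually.of_forall fun x => ?_)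
          exact hFG x
    _ = ∫ y, G y := b.measurePreserving_measurableEquiv.integral_comp' G
    _ = ∫ p : ℝ × EuclideanSpace ℝ (Fin (m+1)), G (fhSplit m p) :=
          ((fhSplit_measurePreserving m).integral_comp' G).symm
    _ = _ := integral_congr_ae (Filter.Eventually.of_forall fun p => hGsplit p)
  -- integrability transported
  have hIntW : Integrable (fun p : ℝ × EuclideanSpace ℝ (Fin (m+1)) => W p.1 ‖p.2‖) := by
    have h1 : Integrable (fun x => G (b.measurableEquiv x)) := by
      exact hIntF.congr (Filter.Eventually.of_forall fun x => hFG x)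
    have h2 : Integrable G :=
      ((b.measurePreserving_measurableEquiv.integrable_comp_emb
        (b.measurableEquiv.measurableEmbedding)).1 h1)
    have h3 : Integrable (fun p : ℝ × EuclideanSpace ℝ (Fin (m+1)) => G (fhSplit m p)) :=
      ((fhSplit_measurePreserving m).integrable_comp_emb
        (fhSplit m).measurableEmbedding).2 h2
    exact h3.congr (Filter.Eventually.of_forall fun p => hGsplit p)
  -- Fubini
  have hstep2 : ∫ p : ℝ × EuclideanSpace ℝ (Fin (m+1)), W p.1 ‖p.2‖
      = ∫ t : ℝ, ∫ y : EuclideanSpace ℝ (Fin (m+1)), W t ‖y‖ := by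
    exact MeasureTheory.integral_prod _ hIntW
  -- radial inner integral
  have hstep3 : ∀ t : ℝ, ∫ y : EuclideanSpace ℝ (Fin (m+1)), W t ‖y‖
      = sphereVol m * ∫ ρ in Ioi (0:ℝ), ρ^m * W t ρ := by
    intro t
    rw [integral_fun_norm_addHaar (volume : Measure (EuclideanSpace ℝ (Fin (m+1)))) (W t),
      fh_sphereVol_eq m]
    simp only [finrank_euclideanSpace_fin, Nat.add_sub_cancel, nsmul_eq_mul, smul_eq_mul]
    rw [mul_assoc]
    rfl
  -- the 2D function
  set Omg : ℝ × ℝ → ℝ := fun p => Set.indicator (Ioi (0:ℝ)) (fun ρ => ρ^m * W p.1 ρ) p.2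
    with hOdef
  have hOmeas : Measurable Omg := by
    have hWm : Measurable (fun p : ℝ × ℝ => p.2^m * W p.1 p.2) := by
      apply (measurable_snd.pow_const m).mul
      apply ((hψmeas.comp (by fun_prop : Measurable fun p : ℝ × ℝ =>
        Real.sqrt (p.1^2 + p.2^2)))).mul
      exact hh.measurable.comp ((by fun_prop : Measurable fun p : ℝ × ℝ => ‖v‖ * p.1).div
        (by fun_prop : Measurable fun p : ℝ × ℝ => Real.sqrt (p.1^2 + p.2^2)))
    have : Omg = Set.indicator {p : ℝ × ℝ | p.2 ∈ Ioi (0:ℝ)}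
        (fun p => p.2^m * W p.1 p.2) := by
      funext p
      by_cases hp : p.2 ∈ Ioi (0:ℝ)
      · rw [hOdef]
        simp only [Set.indicator_of_mem hp, Set.indicator_of_mem (show p ∈ {p : ℝ × ℝ | p.2 ∈ Ioi (0:ℝ)} from hp)]
      · rw [hOdef]
        simp only [Set.indicator_of_notMem hp, Set.indicator_of_notMem
          (show p ∉ {p : ℝ × ℝ | p.2 ∈ Ioi (0:ℝ)} from hp)]
    rw [this]
    exact hWm.indicator (measurable_snd measurableSet_Ioi)
  have hIntO : Integrable Omg := by
    refine Integrable.mono' (g := fun p => (Icc (-1:ℝ) 1 ×ˢ Icc (0:ℝ) 1).indicator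
      (fun _ => M) p) ((integrable_indicator_iff
        (measurableSet_Icc.prod measurableSet_Icc)).2 ((integrableOn_const_iff enorm_ne_top).2
        (Or.inr (isCompact_Icc.prod isCompact_Icc).measure_lt_top)))
      hOmeas.aestronglyMeasurable (Filter.Eventually.of_forall fun p => ?_)
    rcases p with ⟨t, ρ⟩
    by_cases hρ : ρ ∈ Ioi (0:ℝ)
    · by_cases hr : Real.sqrt (t^2 + ρ^2) < 1
      · have hmem : (t, ρ) ∈ Icc (-1:ℝ) 1 ×ˢ Icc (0:ℝ) 1 := by
          have hlt : t^2 + ρ^2 < 1 := by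
            have := (Real.sqrt_lt' one_pos).1 hr
            linarith [this]
          constructor
          · rw [Set.mem_Icc, ← abs_le]
            nlinarith [abs_nonneg t, sq_abs t, sq_nonneg ρ, hlt]
          · rw [Set.mem_Icc]
            constructor
            · exact hρ.out.le
            · nlinarith [hρ.out]
        refine le_trans ?_ (le_of_eq (Set.indicator_of_mem hmem (fun _ => M)).symm)
        rw [hOdef]
        simp only [Set.indicator_of_mem hρ]
        have hρ1 : ρ ≤ 1 := by nlinarith [hρ.out, (Real.sqrt_lt' one_pos).1 hr]
        calc ‖ρ^m * W t ρ‖ = ‖ρ^m‖ * (‖ψ (Real.sqrt (t^2+ρ^2))‖ * ‖h _‖) := by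
              rw [norm_mul, norm_mul]
        _ ≤ 1 * (1 * M) := by
            refine mul_le_mul ?_ (mul_le_mul ?_ ?_ (norm_nonneg _) zero_le_one)
              (by positivity) zero_le_one
            · rw [Real.norm_eq_abs, abs_of_nonneg (pow_nonneg hρ.out.le m)]
              exact pow_le_one₀ hρ.out.le hρ1
            · rw [Real.norm_eq_abs]; exact hψle _
            · refine hM _ ?_
              rw [Set.mem_Icc, ← abs_le]
              rcases eq_or_lt_of_le (Real.sqrt_nonneg (t^2+ρ^2)) with hs0 | hs0
              · rw [← hs0]; simp [norm_nonneg]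
              · rw [abs_div, abs_of_pos hs0, div_le_iff₀ hs0, abs_mul,
                  abs_of_nonneg (norm_nonneg v)]
                have : |t| ≤ Real.sqrt (t^2 + ρ^2) := by
                  rw [← Real.sqrt_sq_eq_abs]
                  exact Real.sqrt_le_sqrt (by nlinarith)
                nlinarith [norm_nonneg v, abs_nonneg t]
        _ = M := by ring
      · have hψ0 : ψ (Real.sqrt (t^2 + ρ^2)) = 0 :=
          Set.indicator_of_notMem (by simpa using not_lt.1 hr) _
        rw [hOdef]
        simp only [Set.indicator_of_mem hρ, hWdef, hψ0, zero_mul, mul_zero, norm_zero]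
        exact Set.indicator_apply_nonneg (fun _ => hM0)
    · rw [hOdef]
      simp only [Set.indicator_of_notMem hρ, norm_zero]
      exact Set.indicator_apply_nonneg (fun _ => hM0)
  -- iterated to double integral and polar coordinates
  have hstep4 : ∫ t : ℝ, ∫ ρ in Ioi (0:ℝ), ρ^m * W t ρ = ∫ p : ℝ × ℝ, Omg p := by
    have h1 : ∀ t : ℝ, ∫ ρ in Ioi (0:ℝ), ρ^m * W t ρ = ∫ ρ : ℝ, Omg (t, ρ) := by
      intro t
      rw [hOdef]
      exact (integral_indicator measurableSet_Ioi).symm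
    simp only [h1]
    exact (MeasureTheory.integral_integral (f := fun t ρ => Omg (t, ρ)) hIntO).trans rfl
  have hpolar : ∫ p : ℝ × ℝ, Omg p
      = ∫ p in polarCoord.target, p.1 • Omg (polarCoord.symm p) :=
    (integral_comp_polarCoord_symm Omg).symm
  set f₂ : ℝ → ℝ := fun θ => Set.indicator {θ : ℝ | 0 < Real.sin θ}
    (fun θ => Real.sin θ^m * h (‖v‖ * Real.cos θ)) θ with hf₂def
  have hfact : ∫ p in polarCoord.target, p.1 • Omg (polarCoord.symm p)
      = (∫ r in Ioi (0:ℝ), r^(m+1) * ψ r) * ∫ θ in Ioo (-Real.pi) Real.pi, f₂ θ := by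
    rw [polarCoord_target]
    rw [show (volume : Measure (ℝ × ℝ)) = Measure.prod volume volume from rfl]
    rw [← setIntegral_prod_mul (fun r => r^(m+1) * ψ r) f₂ (Ioi (0:ℝ))
      (Ioo (-Real.pi) Real.pi)]
    refine setIntegral_congr_fun (measurableSet_Ioi.prod measurableSet_Ioo) ?_
    rintro ⟨r, θ⟩ ⟨hr, hθ⟩
    have hr : (0:ℝ) < r := hr
    simp only [polarCoord_symm_apply, smul_eq_mul]
    by_cases hsθ : 0 < Real.sin θ
    · have hρpos : 0 < r * Real.sin θ := mul_pos hr hsθ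
      have hsq : (r * Real.cos θ)^2 + (r * Real.sin θ)^2 = r^2 := by
        have := Real.sin_sq_add_cos_sq θ
        nlinarith [this]
      rw [hOdef]
      simp only [Set.indicator_of_mem (show r * Real.sin θ ∈ Ioi (0:ℝ) from hρpos)]
      rw [hWdef]
      simp only [hsq, Real.sqrt_sq hr.le]
      rw [hf₂def]
      simp only [Set.indicator_of_mem (show θ ∈ {θ : ℝ | 0 < Real.sin θ} from hsθ)]
      rw [show ‖v‖ * (r * Real.cos θ) / r = ‖v‖ * Real.cos θ from by field_simp]
      ring
    · have hρnp : r * Real.sin θ ∉ Ioi (0:ℝ) := by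
        simp only [mem_Ioi, not_lt]
        exact mul_nonpos_of_nonneg_of_nonpos hr.le (not_lt.1 hsθ)
      rw [hOdef]
      simp only [Set.indicator_of_notMem hρnp]
      rw [hf₂def]
      simp only [Set.indicator_of_notMem (show θ ∉ {θ : ℝ | 0 < Real.sin θ} from hsθ)]
      ring
  -- the angular integral
  have hsinmeas : MeasurableSet {θ : ℝ | 0 < Real.sin θ} :=
    measurableSet_lt measurable_const Real.measurable_sin
  have hT : ∫ θ in Ioo (-Real.pi) Real.pi, f₂ θ
      = ∫ θ in Ioo 0 Real.pi, Real.sin θ^m * h (‖v‖ * Real.cos θ) := by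
    have hset : Ioo (-Real.pi) Real.pi ∩ {θ : ℝ | 0 < Real.sin θ} = Ioo 0 Real.pi := by
      ext θ
      constructor
      · rintro ⟨⟨h1, h2⟩, h3⟩
        refine ⟨?_, h2⟩
        by_contra hle
        exact absurd h3 (not_lt.2 (Real.sin_nonpos_of_nonpos_of_neg_pi_le
          (not_lt.1 hle) h1.le))
      · rintro ⟨h1, h2⟩
        exact ⟨⟨lt_trans (neg_lt_zero.2 Real.pi_pos) h1, h2⟩,
          Real.sin_pos_of_pos_of_lt_pi h1 h2⟩
    rw [hf₂def, setIntegral_indicator hsinmeas, hset]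
  -- the radial constant
  have hc : c = 1/(m+2) := by
    rw [hcdef]
    have he : ∀ r : ℝ, r^(m+1) * ψ r = Set.indicator (Iio (1:ℝ)) (fun r => r^(m+1)) r := by
      intro r
      by_cases hr1 : r ∈ Iio (1:ℝ)
      · rw [hψdef]
        simp only [Set.indicator_of_mem hr1]
        ring
      · rw [hψdef]
        simp only [Set.indicator_of_notMem hr1]
        ring
    simp only [he]
    rw [setIntegral_indicator measurableSet_Iio, Ioi_inter_Iio,
      ← MeasureTheory.integral_Ioc_eq_integral_Ioo,
      ← intervalIntegral.integral_of_le (by norm_num : (0:ℝ) ≤ 1),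
      integral_pow]
    push_cast
    norm_num
    ring
  have hc0 : c ≠ 0 := by
    rw [hc]
    positivity
  -- assemble the right-hand side
  have hR : ∫ x, F x = sphereVol m *
      (c * ∫ θ in Ioo 0 Real.pi, Real.sin θ^m * h (‖v‖ * Real.cos θ)) := by
    rw [hstep1, hstep2]
    calc ∫ t : ℝ, ∫ y : EuclideanSpace ℝ (Fin (m+1)), W t ‖y‖
        = ∫ t : ℝ, sphereVol m * ∫ ρ in Ioi (0:ℝ), ρ^m * W t ρ := by
          exact integral_congr_ae (Filter.Eventually.of_forall fun t => hstep3 t)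
    _ = sphereVol m * ∫ t : ℝ, ∫ ρ in Ioi (0:ℝ), ρ^m * W t ρ :=
          integral_const_mul _ _
    _ = _ := by rw [hstep4, hpolar, hfact, hT]
  -- finish
  have hmain := hL.symm.trans hR
  have goal' : (∫ σ : Metric.sphere (0 : EuclideanSpace ℝ (Fin (m+2))) 1,
      h ⟪(σ : EuclideanSpace ℝ (Fin (m+2))), v⟫
      ∂(volume : Measure (EuclideanSpace ℝ (Fin (m+2)))).toSphere)
      = sphereVol m * ∫ θ in Ioo 0 Real.pi, Real.sin θ^m * h (‖v‖ * Real.cos θ) := by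
    refine mul_right_cancel₀ hc0 ?_
    rw [hmain]
    ring
  rw [goal']
  rw [show m + 2 - 2 = m from by omega]
  rw [intervalIntegral.integral_of_le (by norm_num : (-1:ℝ) ≤ 1),
    MeasureTheory.integral_Ioc_eq_integral_Ioo,
    show ((↑(m+2):ℝ) - 3)/2 = ((m:ℝ)-1)/2 from by push_cast; ring,
    fh_subst_cos m h ‖v‖]
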